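/- arXiv:1804.06861 — 2 statements merged into one kernel-verified Lean document; each statement's English description precedes it below -/
import Mathlib

section
/- Let H be a nonnegative random variable with continuous strictly increasing CDF F, and suppose λ > 0, S > 0, A ≥ 1 satisfy λ·A·S < 1 and the average power constraint S = E[ min( max(1/λ − 1/H, 0), A·S ) ]. Then 1 − F( λ/(1 − λ·A·S) ) ≤ 1/A ≤ 1 − F(λ). -/
open MeasureTheory Real Set Filter

theorem stmt3 {Ω : Type*} [MeasureSpace Ω] [IsProbabilityMeasure (volume : Measure Ω)]
    (H : Ω → ℝ) (hHmeas : Measurable H) (hHnn : ∀ ω, 0 ≤ H ω)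
    (F : ℝ → ℝ) (hF : ∀ x, F x = (volume {ω | H ω ≤ x}).toReal)
    (hFc : Continuous F) (hFsm : StrictMonoOn F (Set.Ici 0))
    (lam S A : ℝ) (hlam : 0 < lam) (hS : 0 < S) (hA : 1 ≤ A)
    (hpeak : lam * A * S < 1)
    (hconstraint : S = ∫ ω, min (max (1 / lam - 1 / H ω) 0) (A * S)) :
    1 - F (lam / (1 - lam * A * S)) ≤ 1 / A ∧ 1 / A ≤ 1 - F lam := by
  set g : Ω → ℝ := fun ω => min (max (1 / lam - 1 / H ω) 0) (A * S) with hg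
  have hApos : (0:ℝ) < A := lt_of_lt_of_le one_pos hA
  have hASpos : 0 < A * S := mul_pos hApos hS
  have hden : 0 < 1 - lam * A * S := by linarith
  set c : ℝ := lam / (1 - lam * A * S) with hc
  have hcpos : 0 < c := div_pos hlam hden
  have hgmeas : Measurable g := by
    exact ((measurable_const.sub (measurable_const.div hHmeas)).max measurable_const).min
      measurable_const
  have hgbound : ∀ ω, g ω ≤ A * S := fun ω => min_le_right _ _
  have hgnn : ∀ ω, 0 ≤ g ω := fun ω => le_min (le_max_right _ _) hASpos.le
  have hgint : Integrable g := by
    apply Integrable.mono' (integrable_const (A * S)) hgmeas.aestronglyMeasurable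
    filter_upwards with ω
    rw [Real.norm_eq_abs, abs_of_nonneg (hgnn ω)]; exact hgbound ω
  -- F 0 = 0
  have hF0 : F 0 = 0 := by
    have hneg : ∀ x < (0:ℝ), F x = 0 := by
      intro x hx
      rw [hF]
      have : {ω | H ω ≤ x} = (∅ : Set Ω) := by
        ext ω; simp only [mem_setOf_eq, mem_empty_iff_false, iff_false, not_le]
        linarith [hHnn ω]
      rw [this, measure_empty, ENNReal.toReal_zero]
    have h1 : Tendsto F (nhdsWithin 0 (Iio 0)) (nhds (F 0)) :=
      (hFc.tendsto 0).mono_left nhdsWithin_le_nhds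
    have h2 : Tendsto F (nhdsWithin 0 (Iio 0)) (nhds 0) := by
      apply Tendsto.congr' _ tendsto_const_nhds
      filter_upwards [self_mem_nhdsWithin] with x hx
      exact (hneg x hx).symm
    exact tendsto_nhds_unique h1 h2
  have hH0 : ∀ᵐ ω, 0 < H ω := by
    have h0 : volume {ω | H ω ≤ 0} = 0 := by
      have := (hF 0).symm.trans hF0
      rcases (ENNReal.toReal_eq_zero_iff _).mp this with h | h
      · exact h
      · exact absurd h (measure_ne_top _ _)
    rw [ae_iff]
    convert h0 using 2
    ext ω; simp [not_lt]
  have key : ∀ x : ℝ, (volume {ω | x < H ω}).toReal = 1 - F x := by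
    intro x
    have hms : MeasurableSet {ω | H ω ≤ x} := hHmeas measurableSet_Iic
    have hcomp : {ω | x < H ω} = {ω | H ω ≤ x}ᶜ := by
      ext ω; simp [not_le]
    rw [hcomp, measure_compl hms (measure_ne_top _ _), measure_univ, hF x,
      ENNReal.toReal_sub_of_le prob_le_one (by simp), ENNReal.toReal_one]
  -- upper bound: S ≤ (1 - F lam) * (A * S)
  have hsetl : MeasurableSet {ω | lam < H ω} := hHmeas measurableSet_Ioi
  have hsetc : MeasurableSet {ω | c < H ω} := hHmeas measurableSet_Ioi
  have hup : S ≤ (1 - F lam) * (A * S) := by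
    have hle : g ≤ᵐ[volume] ({ω | lam < H ω}).indicator (fun _ => A * S) := by
      filter_upwards [hH0] with ω hω
      by_cases h : ω ∈ {ω | lam < H ω}
      · rw [indicator_of_mem h]; exact hgbound ω
      · rw [indicator_of_notMem h]
        simp only [mem_setOf_eq, not_lt] at h
        have h1 : 1 / lam ≤ 1 / H ω := one_div_le_one_div_of_le hω h
        have h2 : max (1 / lam - 1 / H ω) 0 = 0 := max_eq_right (by linarith)
        simp only [hg, h2, min_le_iff]
        left; rfl
    have := integral_mono_ae hgint ((integrable_const (A*S)).indicator hsetl) hle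
    rw [← hconstraint, integral_indicator_const _ hsetl, smul_eq_mul, measureReal_def, key lam] at this
    exact this
  -- lower bound: (1 - F c) * (A * S) ≤ S
  have hlow : (1 - F c) * (A * S) ≤ S := by
    have hle : ({ω | c < H ω}).indicator (fun _ => A * S) ≤ᵐ[volume] g := by
      filter_upwards with ω
      by_cases h : ω ∈ {ω | c < H ω}
      · rw [indicator_of_mem h]
        replace h : c < H ω := h
        have h1 : 1 / H ω < 1 / c := one_div_lt_one_div_of_lt hcpos h
        have h2 : 1 / c = (1 - lam * A * S) / lam := by
          rw [hc, one_div_div]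
        have h3 : 1 / lam - (1 - lam * A * S) / lam = A * S := by
          field_simp
          ring
        have h4 : A * S ≤ 1 / lam - 1 / H ω := by
          rw [h2] at h1; linarith
        exact le_min (le_max_of_le_left h4) le_rfl
      · rw [indicator_of_notMem h]; exact hgnn ω
    have := integral_mono_ae ((integrable_const (A*S)).indicator hsetc) hgint hle
    rw [← hconstraint, integral_indicator_const _ hsetc, smul_eq_mul, measureReal_def, key c] at this
    exact this
  constructor
  · rw [le_div_iff₀ hApos]
    nlinarith [hlow]
  · rw [div_le_iff₀ hApos]
    nlinarith [hup]
end

section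
/- Under the hypotheses of the previous constraint, the Lagrange multiplier satisfies F⁻¹(1 − 1/A) / (1 + A·S·F⁻¹(1 − 1/A)) ≤ λ ≤ F⁻¹(1 − 1/A), where F⁻¹ is the inverse of the CDF F. -/
open MeasureTheory Real Set Filter
open Topology

theorem stmt4 {Ω : Type*} [MeasureSpace Ω] [IsProbabilityMeasure (volume : Measure Ω)]
    (H : Ω → ℝ) (hHmeas : Measurable H) (hHnn : ∀ ω, 0 ≤ H ω)
    (F : ℝ → ℝ) (hF : ∀ x, F x = (volume {ω | H ω ≤ x}).toReal)
    (hFc : Continuous F) (hFsm : StrictMonoOn F (Set.Ici 0))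
    (Finv : ℝ → ℝ) (hFinv : ∀ p, 0 ≤ p → p < 1 → F (Finv p) = p)
    (lam S A : ℝ) (hlam : 0 < lam) (hS : 0 < S) (hA : 1 ≤ A)
    (hpeak : lam * A * S < 1)
    (hconstraint : S = ∫ ω, min (max (1 / lam - 1 / H ω) 0) (A * S)) :
    Finv (1 - 1 / A) / (1 + A * S * Finv (1 - 1 / A)) ≤ lam ∧
      lam ≤ Finv (1 - 1 / A) := by
  set g : Ω → ℝ := fun ω => min (max (1 / lam - 1 / H ω) 0) (A * S) with hg
  have hA0 : (0:ℝ) < A := lt_of_lt_of_le one_pos hA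
  have hAS : (0:ℝ) < A * S := mul_pos hA0 hS
  -- measurability and integrability of g
  have hgmeas : Measurable g := by
    apply Measurable.min _ measurable_const
    apply Measurable.max _ measurable_const
    exact Measurable.sub measurable_const (measurable_const.div hHmeas)
  have hg_nonneg : ∀ ω, 0 ≤ g ω := fun ω => le_min (le_max_right _ _) hAS.le
  have hg_le : ∀ ω, g ω ≤ A * S := fun ω => min_le_right _ _
  have hgint : Integrable g volume :=
    (integrable_const (A*S)).mono' hgmeas.aestronglyMeasurable
      (Filter.Eventually.of_forall fun ω => by
        rw [Real.norm_eq_abs, abs_of_nonneg (hg_nonneg ω)]; exact hg_le ω)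
  -- tail probability
  have htail : ∀ t : ℝ, (volume {ω | t < H ω}).toReal = 1 - F t := by
    intro t
    have hset : {ω | t < H ω} = {ω | H ω ≤ t}ᶜ := by ext ω; simp [not_le]
    have hms : MeasurableSet {ω | H ω ≤ t} := hHmeas measurableSet_Iic
    rw [hset, measure_compl hms (measure_ne_top volume _), measure_univ,
      ENNReal.toReal_sub_of_le prob_le_one ENNReal.one_ne_top, ENNReal.toReal_one, hF t]
  -- F is zero on negatives, and F 0 = 0 by continuity
  have hFneg : ∀ x : ℝ, x < 0 → F x = 0 := by
    intro x hx
    rw [hF x]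
    have hempty : {ω | H ω ≤ x} = ∅ := by
      ext ω; simp only [mem_setOf_eq, mem_empty_iff_false, iff_false, not_le]
      linarith [hHnn ω]
    simp [hempty]
  have hF0 : F 0 = 0 := by
    have h1 : Tendsto (fun n : ℕ => -(1 / (n + 1 : ℝ))) atTop (𝓝 0) := by
      simpa using (tendsto_one_div_add_atTop_nhds_zero_nat (𝕜 := ℝ)).neg
    have h2 : Tendsto (fun n : ℕ => F (-(1 / (n + 1 : ℝ)))) atTop (𝓝 (F 0)) :=
      (hFc.continuousAt.tendsto).comp h1
    have h3 : (fun n : ℕ => F (-(1 / (n + 1 : ℝ)))) = fun _ => (0:ℝ) := by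
      funext n
      refine hFneg _ ?_
      have : (0:ℝ) < 1 / (n + 1 : ℝ) := by positivity
      linarith
    rw [h3] at h2
    exact tendsto_nhds_unique h2 tendsto_const_nhds
  have hnull : volume {ω | H ω ≤ (0:ℝ)} = 0 := by
    have h := (hF 0).symm.trans hF0
    exact ((ENNReal.toReal_eq_zero_iff _).mp h).resolve_right (measure_ne_top _ _)
  have haepos : ∀ᵐ ω, 0 < H ω := by
    rw [ae_iff]
    have : {ω | ¬ 0 < H ω} = {ω | H ω ≤ 0} := by ext ω; simp [not_lt]
    rw [this]; exact hnull
  -- strict mono inversion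
  have hinv : ∀ a b : ℝ, 0 ≤ a → 0 ≤ b → F a ≤ F b → a ≤ b := by
    intro a b ha hb hab
    by_contra h; push_neg at h
    exact absurd hab (not_le.mpr (hFsm hb ha h))
  -- upper bound integral inequality
  have hub : S ≤ A * S * (1 - F lam) := by
    have hmsl : MeasurableSet {ω | lam < H ω} := measurableSet_lt measurable_const hHmeas
    have hind : Integrable ({ω | lam < H ω}.indicator (fun _ => A*S)) volume :=
      (integrable_const _).indicator hmsl
    have hae : g ≤ᵐ[volume] {ω | lam < H ω}.indicator (fun _ => A * S) := by
      filter_upwards [haepos] with ω hω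
      by_cases h : lam < H ω
      · simp only [Set.indicator_apply, Set.mem_setOf_eq, if_pos h]; exact hg_le ω
      · simp only [Set.indicator_apply, Set.mem_setOf_eq, if_neg h]
        push_neg at h
        have h1 : 1 / lam ≤ 1 / H ω := one_div_le_one_div_of_le hω h
        have hmax : max (1/lam - 1/H ω) 0 = 0 := max_eq_right (by linarith)
        show g ω ≤ 0
        rw [hg]
        simp only [hmax]
        rw [min_eq_left hAS.le]
    calc S = ∫ ω, g ω := hconstraint
      _ ≤ ∫ ω, {ω | lam < H ω}.indicator (fun _ => A*S) ω := integral_mono_ae hgint hind hae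
      _ = (volume {ω | lam < H ω}).toReal • (A*S) := integral_indicator_const _ hmsl
      _ = A * S * (1 - F lam) := by rw [htail, smul_eq_mul, mul_comm]
  have hFlam : F lam ≤ 1 - 1 / A := by
    have h1 : 1 ≤ A * (1 - F lam) := by nlinarith
    have h2 : 1 / A ≤ 1 - F lam := by rw [div_le_iff₀ hA0]; nlinarith
    linarith
  -- properties of q := Finv (1 - 1/A)
  have h1A0 : (0:ℝ) ≤ 1 - 1/A := by
    have : 1/A ≤ 1 := by rw [div_le_one hA0]; linarith
    linarith
  have h1A1 : 1 - 1/A < 1 := by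
    have : (0:ℝ) < 1/A := by positivity
    linarith
  have hFq : F (Finv (1 - 1/A)) = 1 - 1/A := hFinv _ h1A0 h1A1
  have hFlampos : 0 < F lam := by
    have := hFsm (le_refl (0:ℝ)) hlam.le hlam
    rw [hF0] at this; exact this
  have hq0 : 0 ≤ Finv (1 - 1/A) := by
    by_contra h; push_neg at h
    have h0 : F (Finv (1-1/A)) = 0 := hFneg _ h
    rw [hFq] at h0
    linarith
  have hupper : lam ≤ Finv (1 - 1/A) :=
    hinv lam _ hlam.le hq0 (hFlam.trans_eq hFq.symm)
  refine ⟨?_, hupper⟩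
  -- lower bound
  rcases eq_or_lt_of_le hq0 with hq | hq
  · rw [← hq]; simp [hlam.le]
  · set c : ℝ := 1/lam - A*S with hc
    have hc0 : 0 < c := by
      rw [hc, sub_pos, lt_div_iff₀ hlam]; nlinarith
    have hci0 : 0 < c⁻¹ := inv_pos.mpr hc0
    have hlb : A * S * (1 - F c⁻¹) ≤ S := by
      have hms : MeasurableSet {ω | c⁻¹ < H ω} := measurableSet_lt measurable_const hHmeas
      have hind : Integrable ({ω | c⁻¹ < H ω}.indicator (fun _ => A*S)) volume :=
        (integrable_const _).indicator hms
      have hptw : ∀ ω, {ω | c⁻¹ < H ω}.indicator (fun _ => A*S) ω ≤ g ω := by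
        intro ω
        by_cases h : c⁻¹ < H ω
        · simp only [Set.indicator_apply, Set.mem_setOf_eq, if_pos h]
          have hHpos : 0 < H ω := lt_trans hci0 h
          have hinvH : (H ω)⁻¹ < c := by
            rw [← inv_inv c]
            exact inv_strictAnti₀ hci0 h
          have h1H : 1 / H ω < c := by rw [one_div]; exact hinvH
          have hx : A * S < 1/lam - 1/H ω := by rw [hc] at h1H; linarith
          exact le_min (le_max_of_le_left hx.le) le_rfl
        · simp only [Set.indicator_apply, Set.mem_setOf_eq, if_neg h]; exact hg_nonneg ω
      calc A*S*(1 - F c⁻¹) = (volume {ω | c⁻¹ < H ω}).toReal • (A*S) := by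
            rw [htail, smul_eq_mul, mul_comm]
        _ = ∫ ω, {ω | c⁻¹ < H ω}.indicator (fun _ => A*S) ω := (integral_indicator_const _ hms).symm
        _ ≤ ∫ ω, g ω := integral_mono hind hgint hptw
        _ = S := hconstraint.symm
    have hFc' : 1 - 1/A ≤ F c⁻¹ := by
      have h1 : A * (1 - F c⁻¹) ≤ 1 := by nlinarith
      have h2 : 1 - F c⁻¹ ≤ 1/A := by rw [le_div_iff₀ hA0]; nlinarith
      linarith
    have hqc : Finv (1 - 1/A) ≤ c⁻¹ :=
      hinv _ _ hq0 hci0.le (by rw [hFq]; exact hFc')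
    set q : ℝ := Finv (1 - 1/A)
    have hqc2 : q * c ≤ 1 := by
      have := mul_le_mul_of_nonneg_right hqc hc0.le
      rwa [inv_mul_cancel₀ hc0.ne'] at this
    have hqc3 : q * (1/lam) - q * (A*S) ≤ 1 := by rw [hc] at hqc2; nlinarith
    have hlaminv : lam * (1/lam) = 1 := by field_simp
    have hkey : q ≤ lam * (1 + A * S * q) := by
      nlinarith [mul_le_mul_of_nonneg_left hqc3 hlam.le]
    have hden : 0 < 1 + A * S * q := by nlinarith
    rw [div_le_iff₀ hden]
    linarith [hkey]
end
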